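/- For integers m ≥ 0 and n, k, s ≥ 1, one has x₀^m ш (x₁^n x₀^k x₁^s) = Σ_{m₁+m₂+m₃=m, m_i ≥ 0} C(m₂+k-1, k-1) · 𝔅_{n}^{m₁} x₁ x₀^{m₂+k} 𝔅_{s+1}^{m₃}, an identity of multisets of words, where a binomial coefficient c multiplying a multiset means the multiset repeated c times. -/

import Mathlib

/-- The shuffle product of two words, as a multiset of words. -/
def shuffle {X : Type*} : List X → List X → Multiset (List X)
  | u, [] => {u}
  | [], v => {v}
  | a :: u, b :: v =>
      (shuffle u (b :: v)).map (a :: ·) + (shuffle (a :: u) v).map (b :: ·)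
termination_by u v => u.length + v.length

/-- The two-letter alphabet `X = {x₀, x₁}`. -/
def x0 : Bool := false
def x1 : Bool := true

/-- `𝔅_r^m`: the multiset of all words `x₀^{m₁} x₁ x₀^{m₂} x₁ ⋯ x₁ x₀^{m_r}`
with `m₁ + ⋯ + m_r = m`, `m_i ≥ 0`. -/
def B (r m : ℕ) : Multiset (List Bool) :=
  (Finset.Nat.antidiagonalTuple r m).val.map fun f =>
    List.intercalate [x1] (List.ofFn fun i => List.replicate (f i) x0)

/-- `S w T`: the multiset of all concatenations `u ++ w ++ v` with `u ∈ S`, `v ∈ T`,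
counted with multiplicity. -/
def msConcat {X : Type*} (S : Multiset (List X)) (w : List X) (T : Multiset (List X)) :
    Multiset (List X) :=
  S.bind fun u => T.map fun v => u ++ w ++ v

open Finset

/-! ### shuffle equations -/

theorem shuffle_nil_right {X : Type*} (u : List X) : shuffle u [] = {u} := by
  cases u <;> rw [shuffle]

theorem shuffle_nil_left {X : Type*} (v : List X) : shuffle [] v = {v} := by
  cases v
  · rw [shuffle]
  · rw [shuffle]; simp

theorem shuffle_cons_cons {X : Type*} (a b : X) (u v : List X) :
    shuffle (a :: u) (b :: v) =
      (shuffle u (b :: v)).map (a :: ·) + (shuffle (a :: u) v).map (b :: ·) := by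
  rw [shuffle]

/-! ### sums over antidiagonal tuples -/

theorem list_sum_flatMap {α β M : Type*} [AddCommMonoid M] (l : List α) (g : α → List β)
    (F : β → M) :
    ((l.flatMap g).map F).sum = (l.map fun a => ((g a).map F).sum).sum := by
  induction l with
  | nil => simp
  | cons a l ih => simp [List.flatMap_cons, ih]

theorem sum_AT_succ {M : Type*} [AddCommMonoid M] (k n : ℕ) (F : (Fin (k + 1) → ℕ) → M) :
    ∑ f ∈ Finset.Nat.antidiagonalTuple (k + 1) n, F f
      = ∑ p ∈ antidiagonal n, ∑ g ∈ Finset.Nat.antidiagonalTuple k p.2, F (Fin.cons p.1 g) := by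
  rw [Finset.sum_eq_multiset_sum]
  have h1 : (Finset.Nat.antidiagonalTuple (k + 1) n).val
      = ↑(List.Nat.antidiagonalTuple (k + 1) n) := rfl
  rw [h1, List.Nat.antidiagonalTuple, Multiset.map_coe, Multiset.sum_coe, list_sum_flatMap]
  rw [Finset.sum_eq_multiset_sum]
  have h2 : (antidiagonal n).val = ↑(List.Nat.antidiagonal n) := rfl
  rw [h2, Multiset.map_coe, Multiset.sum_coe]
  congr 1
  apply List.map_congr_left
  intro p _
  rw [Finset.sum_eq_multiset_sum]
  have h3 : (Finset.Nat.antidiagonalTuple k p.2).val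
      = ↑(List.Nat.antidiagonalTuple k p.2) := rfl
  rw [h3, Multiset.map_coe, Multiset.sum_coe, List.map_map]
  rfl

/-! ### multiset helpers -/

theorem ms_map_finsum {ι α β : Type*} (s : Finset ι) (F : ι → Multiset α) (h : α → β) :
    (∑ i ∈ s, F i).map h = ∑ i ∈ s, (F i).map h :=
  map_sum (Multiset.mapAddMonoidHom h) F s

def bindHom {α β : Type*} (f : α → Multiset β) : Multiset α →+ Multiset β where
  toFun := (Multiset.bind · f)
  map_zero' := Multiset.zero_bind f
  map_add' := fun a b => Multiset.add_bind a b f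

theorem bind_finsum {ι α β : Type*} (s : Finset ι) (F : ι → Multiset α) (f : α → Multiset β) :
    (∑ i ∈ s, F i).bind f = ∑ i ∈ s, (F i).bind f :=
  map_sum (bindHom f) F s

theorem msConcat_singleton_left {X : Type*} (u w : List X) (T : Multiset (List X)) :
    msConcat {u} w T = T.map fun v => u ++ w ++ v := by
  simp [msConcat]

theorem msConcat_sum_left {ι X : Type*} (s : Finset ι) (S : ι → Multiset (List X)) (w : List X)
    (T : Multiset (List X)) :
    msConcat (∑ i ∈ s, S i) w T = ∑ i ∈ s, msConcat (S i) w T :=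
  bind_finsum s S _

theorem msConcat_smul_left {X : Type*} (c : ℕ) (S : Multiset (List X)) (w : List X)
    (T : Multiset (List X)) :
    msConcat (c • S) w T = c • msConcat S w T :=
  map_nsmul (bindHom _) c S

theorem msConcat_sum_right {ι X : Type*} (s : Finset ι) (S : Multiset (List X)) (w : List X)
    (T : ι → Multiset (List X)) :
    msConcat S w (∑ i ∈ s, T i) = ∑ i ∈ s, msConcat S w (T i) := by
  classical
  induction s using Finset.induction with
  | empty => simp [msConcat]
  | insert _ _ h ih =>
    rw [Finset.sum_insert h, Finset.sum_insert h, ← ih]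
    simp only [msConcat, Multiset.map_add, Multiset.bind_add]

theorem map_prepend_msConcat {X : Type*} (p : List X) (S : Multiset (List X)) (w : List X)
    (T : Multiset (List X)) :
    (msConcat S w T).map (p ++ ·) = msConcat (S.map (p ++ ·)) w T := by
  simp only [msConcat, Multiset.map_bind, Multiset.bind_map, Multiset.map_map]
  apply Multiset.bind_congr
  intro u _
  congr 1
  funext v
  simp [List.append_assoc]

theorem map_prepend_msConcat' {X : Type*} (p : List X) (x : X) (S : Multiset (List X))
    (w : List X) (T : Multiset (List X)) :
    (msConcat S w T).map (fun t => p ++ x :: t) = msConcat (S.map (fun t => p ++ x :: t)) w T := by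
  have h : (fun t : List X => p ++ x :: t) = ((p ++ [x]) ++ ·) := by
    funext t; simp
  rw [h]; exact map_prepend_msConcat _ _ _ _

theorem msConcat_map_right_append {X : Type*} (S : Multiset (List X)) (w q : List X)
    (T : Multiset (List X)) :
    msConcat S w (T.map (q ++ ·)) = msConcat S (w ++ q) T := by
  simp only [msConcat, Multiset.map_map]
  apply Multiset.bind_congr
  intro u _
  congr 1
  funext v
  simp [List.append_assoc]

/-! ### B lemmas -/

def wd {r : ℕ} (f : Fin r → ℕ) : List Bool :=
  List.intercalate [x1] (List.ofFn fun i => List.replicate (f i) x0)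

theorem B_eq_sum (r m : ℕ) :
    B r m = ∑ f ∈ Finset.Nat.antidiagonalTuple r m, ({wd f} : Multiset (List Bool)) := by
  rw [Finset.sum_eq_multiset_sum, B]
  rw [show (Multiset.map (fun f => ({wd f} : Multiset (List Bool)))
      (Finset.Nat.antidiagonalTuple r m).val)
    = Multiset.map (fun w => ({w} : Multiset (List Bool)))
      (Multiset.map wd (Finset.Nat.antidiagonalTuple r m).val) by rw [Multiset.map_map]; rfl]
  rw [Multiset.sum_map_singleton]
  rfl

theorem wd_one (f : Fin 1 → ℕ) : wd f = List.replicate (f 0) x0 := by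
  simp [wd, List.ofFn_succ, List.intercalate]

theorem wd_cons {r : ℕ} (a : ℕ) (g : Fin (r + 1) → ℕ) :
    wd (Fin.cons a g) = List.replicate a x0 ++ x1 :: wd g := by
  rw [wd, List.ofFn_succ]
  simp only [Fin.cons_zero, Fin.cons_succ]
  rw [List.ofFn_succ]
  simp only [List.intercalate, List.intersperse]
  simp [wd, List.ofFn_succ, List.intercalate]

theorem B_one (m : ℕ) : B 1 m = {List.replicate m x0} := by
  rw [B_eq_sum, Finset.Nat.antidiagonalTuple_one, Finset.sum_singleton, wd_one]
  rfl

theorem B_succ (n m : ℕ) :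
    B (n + 2) m = ∑ p ∈ antidiagonal m,
      (B (n + 1) p.2).map fun t => List.replicate p.1 x0 ++ x1 :: t := by
  rw [B_eq_sum, sum_AT_succ]
  refine Finset.sum_congr rfl fun p _ => ?_
  rw [B_eq_sum, ms_map_finsum]
  refine Finset.sum_congr rfl fun g _ => ?_
  rw [wd_cons, Multiset.map_singleton]

/-! ### shuffle with a block of repeated letters -/

theorem M1 {X : Type*} (x y : X) (m : ℕ) (v : List X) :
    shuffle (List.replicate m x) (y :: v) =
      ∑ p ∈ antidiagonal m,
        (shuffle (List.replicate p.2 x) v).map fun t => List.replicate p.1 x ++ y :: t := by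
  induction m generalizing v with
  | zero =>
    simp [shuffle_nil_left]
  | succ m ih =>
    rw [List.replicate_succ, shuffle_cons_cons, Finset.Nat.sum_antidiagonal_succ]
    have h1 : (shuffle (List.replicate m x) (y :: v)).map (x :: ·)
        = ∑ p ∈ antidiagonal m,
            (shuffle (List.replicate p.2 x) v).map
              fun t => List.replicate (p.1 + 1) x ++ y :: t := by
      rw [ih, ms_map_finsum]
      refine Finset.sum_congr rfl fun p _ => ?_
      rw [Multiset.map_map]
      congr 1
    have h2 : (shuffle (x :: List.replicate m x) v).map (y :: ·)
        = (shuffle (List.replicate (m + 1) x) v).map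
            fun t => List.replicate 0 x ++ y :: t := by
      simp [List.replicate_succ]
    rw [h1, h2, add_comm]

theorem L1 (m s : ℕ) :
    shuffle (List.replicate m x0) (List.replicate s x1) = B (s + 1) m := by
  induction s generalizing m with
  | zero => rw [List.replicate_zero, shuffle_nil_right, B_one]
  | succ s ih =>
    rw [List.replicate_succ, M1, B_succ]
    refine Finset.sum_congr rfl fun p _ => ?_
    rw [ih]

theorem M2 {X : Type*} (x y : X) :
    ∀ k m (w : List X), shuffle (List.replicate m x) (List.replicate k x ++ y :: w) =
      ∑ p ∈ antidiagonal m, Nat.choose (p.1 + k) k •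
        (shuffle (List.replicate p.2 x) w).map
          fun t => List.replicate (p.1 + k) x ++ y :: t := by
  intro k
  induction k with
  | zero =>
    intro m w
    simpa using M1 x y m w
  | succ k ihk =>
    intro m
    induction m with
    | zero =>
      intro w
      rw [List.replicate_zero, shuffle_nil_left]
      simp [shuffle_nil_left]
    | succ m ihm =>
      intro w
      rw [List.replicate_succ, show List.replicate (k+1) x ++ y :: w
            = x :: (List.replicate k x ++ y :: w) by simp [List.replicate_succ],
        shuffle_cons_cons]
      rw [show x :: List.replicate m x = List.replicate (m+1) x from (List.replicate_succ ..).symm]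
      rw [show x :: (List.replicate k x ++ y :: w) = List.replicate (k+1) x ++ y :: w
            by simp [List.replicate_succ]]
      rw [ihm w, ihk (m+1) w]
      rw [ms_map_finsum, ms_map_finsum]
      rw [Finset.Nat.sum_antidiagonal_succ (f := fun p => Nat.choose (p.1 + (k+1)) (k+1) •
        (shuffle (List.replicate p.2 x) w).map
          fun t => List.replicate (p.1 + (k+1)) x ++ y :: t)]
      rw [Finset.Nat.sum_antidiagonal_succ (f := fun p => (Nat.choose (p.1 + k) k •
        (shuffle (List.replicate p.2 x) w).map
          (fun t => List.replicate (p.1 + k) x ++ y :: t)).map (x :: ·))]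
      dsimp only
      have hB0 : Multiset.map (fun x_1 => x :: x_1) ((0 + k).choose k •
            Multiset.map (fun t => List.replicate (0 + k) x ++ y :: t)
              (shuffle (List.replicate (m + 1) x) w))
          = (0 + (k + 1)).choose (k + 1) •
              Multiset.map (fun t => List.replicate (0 + (k + 1)) x ++ y :: t)
                (shuffle (List.replicate (m + 1) x) w) := by
        simp [Multiset.map_nsmul, Multiset.map_map, List.replicate_succ, Function.comp_def]
      have hsum : (∑ i ∈ antidiagonal m,
            Multiset.map (fun x_1 => x :: x_1)
              ((i.1 + (k + 1)).choose (k + 1) •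
                Multiset.map (fun t => List.replicate (i.1 + (k + 1)) x ++ y :: t)
                  (shuffle (List.replicate i.2 x) w)))
          + (∑ p ∈ antidiagonal m,
              Multiset.map (fun x_1 => x :: x_1)
                ((p.1 + 1 + k).choose k •
                  Multiset.map (fun t => List.replicate (p.1 + 1 + k) x ++ y :: t)
                    (shuffle (List.replicate p.2 x) w)))
          = ∑ p ∈ antidiagonal m,
              (p.1 + 1 + (k + 1)).choose (k + 1) •
                Multiset.map (fun t => List.replicate (p.1 + 1 + (k + 1)) x ++ y :: t)
                  (shuffle (List.replicate p.2 x) w) := by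
        rw [← Finset.sum_add_distrib]
        refine Finset.sum_congr rfl fun p _ => ?_
        simp only [Multiset.map_nsmul, Multiset.map_map]
        have e1 : ((fun x_1 => x :: x_1) ∘ fun t => List.replicate (p.1 + (k + 1)) x ++ y :: t)
            = fun t => List.replicate (p.1 + 1 + (k + 1)) x ++ y :: t := by
          funext t
          rw [show p.1 + 1 + (k + 1) = (p.1 + (k + 1)) + 1 by omega, List.replicate_succ]
          simp
        have e2 : ((fun x_1 => x :: x_1) ∘ fun t => List.replicate (p.1 + 1 + k) x ++ y :: t)
            = fun t => List.replicate (p.1 + 1 + (k + 1)) x ++ y :: t := by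
          funext t
          rw [show p.1 + 1 + (k + 1) = (p.1 + 1 + k) + 1 by omega, List.replicate_succ]
          simp
        rw [e1, e2, ← add_smul]
        congr 1
        rw [show p.1 + 1 + (k + 1) = (p.1 + k + 1) + 1 by omega, Nat.choose_succ_succ,
          show p.1 + (k + 1) = p.1 + k + 1 by omega, show p.1 + 1 + k = p.1 + k + 1 by omega,
          Nat.succ_eq_add_one]
        omega
      rw [hB0, ← hsum]
      abel

/-! ### antidiagonal reindexing and hockey stick -/

theorem rot {M : Type*} [AddCommMonoid M] (n : ℕ) (F : ℕ → ℕ → ℕ → M) :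
    ∑ p ∈ antidiagonal n, ∑ q ∈ antidiagonal p.1, F q.1 q.2 p.2
      = ∑ p ∈ antidiagonal n, ∑ q ∈ antidiagonal p.2, F p.1 q.1 q.2 := by
  rw [Finset.sum_sigma' (antidiagonal n) (fun p => antidiagonal p.1)
      (fun p q => F q.1 q.2 p.2),
    Finset.sum_sigma' (antidiagonal n) (fun p => antidiagonal p.2)
      (fun p q => F p.1 q.1 q.2)]
  refine Finset.sum_nbij' (fun x => ⟨(x.2.1, x.2.2 + x.1.2), (x.2.2, x.1.2)⟩)
    (fun x => ⟨(x.1.1 + x.2.1, x.2.2), (x.1.1, x.2.1)⟩) ?_ ?_ ?_ ?_ ?_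
  · rintro ⟨⟨c, d⟩, ⟨e, g⟩⟩ hx
    simp only [Finset.mem_sigma, Finset.HasAntidiagonal.mem_antidiagonal, and_true] at hx ⊢
    omega
  · rintro ⟨⟨e, t⟩, ⟨g, h⟩⟩ hx
    simp only [Finset.mem_sigma, Finset.HasAntidiagonal.mem_antidiagonal, and_true] at hx ⊢
    omega
  · rintro ⟨⟨c, d⟩, ⟨e, g⟩⟩ hx
    simp only [Finset.mem_sigma, Finset.HasAntidiagonal.mem_antidiagonal] at hx
    obtain ⟨h1, h2⟩ := hx
    subst h2
    rfl
  · rintro ⟨⟨e, t⟩, ⟨g, h⟩⟩ hx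
    simp only [Finset.mem_sigma, Finset.HasAntidiagonal.mem_antidiagonal] at hx
    obtain ⟨h1, h2⟩ := hx
    subst h2
    rfl
  · rintro ⟨⟨c, d⟩, ⟨e, g⟩⟩ hx
    rfl

theorem hockey (k c : ℕ) :
    ∑ p ∈ antidiagonal c, Nat.choose (p.1 + k) k = Nat.choose (c + k + 1) (k + 1) := by
  rw [Finset.Nat.sum_antidiagonal_eq_sum_range_succ_mk]
  induction c with
  | zero => simp
  | succ c ih =>
    rw [Finset.sum_range_succ, ih, show c + 1 + k = c + k + 1 by omega]
    have h := Nat.choose_succ_succ (c + k + 1) k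
    simp only [Nat.succ_eq_add_one] at h ⊢
    omega

theorem sum_AT3 {M : Type*} [AddCommMonoid M] (m : ℕ) (F : ℕ → ℕ → ℕ → M) :
    ∑ f ∈ Finset.Nat.antidiagonalTuple 3 m, F (f 0) (f 1) (f 2)
      = ∑ p ∈ antidiagonal m, ∑ q ∈ antidiagonal p.2, F p.1 q.1 q.2 := by
  refine (sum_AT_succ 2 m (fun f => F (f 0) (f 1) (f 2))).trans ?_
  refine Finset.sum_congr rfl fun p _ => ?_
  refine (sum_AT_succ 1 p.2 (fun g => F p.1 (g 0) (g 1))).trans ?_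
  refine Finset.sum_congr rfl fun q _ => ?_
  rw [Finset.Nat.antidiagonalTuple_one, Finset.sum_singleton]
  rfl

/-! ### the normal form -/

theorem normalForm (k s' : ℕ) : ∀ n, 1 ≤ n → ∀ m,
    shuffle (List.replicate m x0)
        (List.replicate n x1 ++ List.replicate k x0 ++ List.replicate (s' + 1) x1)
      = ∑ p ∈ antidiagonal m, ∑ q ∈ antidiagonal p.2,
          Nat.choose (q.1 + k) k •
            msConcat (B n p.1) (x1 :: (List.replicate (q.1 + k) x0 ++ [x1]))
              (B (s' + 1) q.2) := by
  intro n hn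
  induction n, hn using Nat.le_induction with
  | base =>
    intro m
    rw [show List.replicate 1 x1 ++ List.replicate k x0 ++ List.replicate (s' + 1) x1
        = x1 :: (List.replicate k x0 ++ x1 :: List.replicate s' x1) by
      simp [List.replicate_succ]]
    rw [M1]
    refine Finset.sum_congr rfl fun p _ => ?_
    rw [M2 x0 x1 k p.2 (List.replicate s' x1), ms_map_finsum]
    refine Finset.sum_congr rfl fun q _ => ?_
    rw [L1, Multiset.map_nsmul, Multiset.map_map, B_one, msConcat_singleton_left]
    congr 1
    apply Multiset.map_congr rfl
    intro t _
    simp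
  | succ n hn ih =>
    obtain ⟨n', rfl⟩ : ∃ n'', n = n'' + 1 := ⟨n - 1, by omega⟩
    intro m
    rw [show List.replicate (n' + 1 + 1) x1 ++ List.replicate k x0
          ++ List.replicate (s' + 1) x1
        = x1 :: (List.replicate (n' + 1) x1 ++ List.replicate k x0
          ++ List.replicate (s' + 1) x1) by simp [List.replicate_succ]]
    rw [M1]
    have hL : ∑ p ∈ antidiagonal m,
          (shuffle (List.replicate p.2 x0)
            (List.replicate (n' + 1) x1 ++ List.replicate k x0
              ++ List.replicate (s' + 1) x1)).map
            (fun t => List.replicate p.1 x0 ++ x1 :: t)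
        = ∑ p ∈ antidiagonal m, ∑ r ∈ antidiagonal p.2, ∑ q ∈ antidiagonal r.2,
            Nat.choose (q.1 + k) k •
              msConcat ((B (n' + 1) r.1).map (fun t => List.replicate p.1 x0 ++ x1 :: t))
                (x1 :: (List.replicate (q.1 + k) x0 ++ [x1])) (B (s' + 1) q.2) := by
      refine Finset.sum_congr rfl fun p _ => ?_
      rw [ih, ms_map_finsum]
      refine Finset.sum_congr rfl fun r _ => ?_
      rw [ms_map_finsum]
      refine Finset.sum_congr rfl fun q _ => ?_
      rw [Multiset.map_nsmul, map_prepend_msConcat']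
    rw [hL]
    have hR : ∑ p ∈ antidiagonal m, ∑ q ∈ antidiagonal p.2,
          Nat.choose (q.1 + k) k •
            msConcat (B (n' + 1 + 1) p.1) (x1 :: (List.replicate (q.1 + k) x0 ++ [x1]))
              (B (s' + 1) q.2)
        = ∑ p ∈ antidiagonal m, ∑ r ∈ antidiagonal p.1, ∑ q ∈ antidiagonal p.2,
            Nat.choose (q.1 + k) k •
              msConcat ((B (n' + 1) r.2).map (fun t => List.replicate r.1 x0 ++ x1 :: t))
                (x1 :: (List.replicate (q.1 + k) x0 ++ [x1])) (B (s' + 1) q.2) := by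
      refine Finset.sum_congr rfl fun p _ => ?_
      rw [Finset.sum_comm]
      refine Finset.sum_congr rfl fun q _ => ?_
      rw [B_succ, msConcat_sum_left, Finset.smul_sum]
    rw [hR]
    exact (rot m (fun a b c => ∑ q ∈ antidiagonal c,
      Nat.choose (q.1 + k) k •
        msConcat ((B (n' + 1) b).map (fun t => List.replicate a x0 ++ x1 :: t))
          (x1 :: (List.replicate (q.1 + k) x0 ++ [x1])) (B (s' + 1) q.2))).symm

theorem shuffle_x0_pow_x1x0x1 (m n k s : ℕ) (hn : 1 ≤ n) (hk : 1 ≤ k) (hs : 1 ≤ s) :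
    shuffle (List.replicate m x0)
        (List.replicate n x1 ++ List.replicate k x0 ++ List.replicate s x1) =
      ∑ f ∈ Finset.Nat.antidiagonalTuple 3 m,
        Nat.choose (f 1 + k - 1) (k - 1) •
          msConcat (B n (f 0)) (x1 :: List.replicate (f 1 + k) x0)
            (B (s + 1) (f 2)) := by
  obtain ⟨k', rfl⟩ : ∃ k', k = k' + 1 := ⟨k - 1, by omega⟩
  obtain ⟨s', rfl⟩ : ∃ s', s = s' + 1 := ⟨s - 1, by omega⟩
  have hR : (∑ f ∈ Finset.Nat.antidiagonalTuple 3 m,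
        Nat.choose (f 1 + (k' + 1) - 1) (k' + 1 - 1) •
          msConcat (B n (f 0)) (x1 :: List.replicate (f 1 + (k' + 1)) x0)
            (B (s' + 1 + 1) (f 2)))
      = ∑ p ∈ antidiagonal m, ∑ q ∈ antidiagonal p.2,
          Nat.choose (q.1 + (k' + 1) - 1) (k' + 1 - 1) •
            msConcat (B n p.1) (x1 :: List.replicate (q.1 + (k' + 1)) x0)
              (B (s' + 1 + 1) q.2) :=
    sum_AT3 m (fun a b c => Nat.choose (b + (k' + 1) - 1) (k' + 1 - 1) •
      msConcat (B n a) (x1 :: List.replicate (b + (k' + 1)) x0) (B (s' + 1 + 1) c))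
  rw [hR, normalForm (k' + 1) s' n hn m]
  refine Finset.sum_congr rfl fun p _ => ?_
  have e1 : ∀ q : ℕ × ℕ,
      Nat.choose (q.1 + (k' + 1) - 1) (k' + 1 - 1) •
          msConcat (B n p.1) (x1 :: List.replicate (q.1 + (k' + 1)) x0) (B (s' + 1 + 1) q.2)
        = ∑ r ∈ antidiagonal q.2, Nat.choose (q.1 + k') k' •
            msConcat (B n p.1)
              (x1 :: (List.replicate (q.1 + r.1 + (k' + 1)) x0 ++ [x1])) (B (s' + 1) r.2) := by
    intro q
    rw [B_succ s' q.2, msConcat_sum_right, show q.1 + (k' + 1) - 1 = q.1 + k' by omega,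
      show k' + 1 - 1 = k' from rfl, Finset.smul_sum]
    refine Finset.sum_congr rfl fun r _ => ?_
    congr 1
    rw [show (fun t => List.replicate r.1 x0 ++ x1 :: t)
        = ((List.replicate r.1 x0 ++ [x1]) ++ ·) by funext t; simp]
    rw [msConcat_map_right_append]
    congr 1
    simp [show q.1 + r.1 + (k' + 1) = q.1 + (k' + 1) + r.1 by omega, List.replicate_add,
      List.append_assoc]
  have h2 : (∑ q ∈ antidiagonal p.2, ∑ r ∈ antidiagonal q.2,
        Nat.choose (q.1 + k') k' • msConcat (B n p.1)
          (x1 :: (List.replicate (q.1 + r.1 + (k' + 1)) x0 ++ [x1])) (B (s' + 1) r.2))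
      = ∑ q ∈ antidiagonal p.2, ∑ r ∈ antidiagonal q.1,
          Nat.choose (r.1 + k') k' • msConcat (B n p.1)
            (x1 :: (List.replicate (r.1 + r.2 + (k' + 1)) x0 ++ [x1])) (B (s' + 1) q.2) :=
    (rot p.2 (fun a b c => Nat.choose (a + k') k' • msConcat (B n p.1)
      (x1 :: (List.replicate (a + b + (k' + 1)) x0 ++ [x1])) (B (s' + 1) c))).symm
  rw [Finset.sum_congr rfl (fun q _ => e1 q), h2]
  refine Finset.sum_congr rfl fun Q hQ => ?_
  have hQ1 : ∀ r ∈ antidiagonal Q.1, r.1 + r.2 = Q.1 := fun r hr => Finset.HasAntidiagonal.mem_antidiagonal.mp hr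
  rw [Finset.sum_congr rfl (fun r hr => by rw [hQ1 r hr])]
  rw [← Finset.sum_smul, hockey k' Q.1,
    show Q.1 + (k' + 1) = Q.1 + k' + 1 from (Nat.add_assoc ..).symm]
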